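/- Let n ≥ 1 be an integer and ψ ∈ ℝ with cos ψ ≥ 0. Then ∫₀^∞ n·(u² + 2u cos ψ + 1)^{−(n+1)/2} du = Σ_{k=0}^{∞} [ (n/2)ₖ · (1/2)ₖ / ( (n/2 + 1)ₖ · k! ) ] · (sin ψ)^{2k}, i.e., the integral equals the Gauss hypergeometric series ₂F₁(n/2, 1/2; n/2 + 1; sin²ψ); the series on the right converges (also when sin²ψ = 1). -/

import Mathlib

open Real Set MeasureTheory Finset

noncomputable def aa (k : ℕ) : ℝ := (ascPochhammer ℝ k).eval (1/2) / (Nat.factorial k)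

lemma asc_pos {t : ℝ} (ht : 0 < t) (k : ℕ) : 0 < (ascPochhammer ℝ k).eval t := by
  induction k with
  | zero => simp
  | succ k ih =>
    rw [ascPochhammer_succ_eval]
    exact mul_pos ih (by positivity)

lemma aa_pos (k : ℕ) : 0 < aa k :=
  div_pos (asc_pos one_half_pos k) (by positivity)

lemma aa_succ (k : ℕ) : ((k:ℝ)+1) * aa (k+1) = ((k:ℝ) + 1/2) * aa k := by
  unfold aa
  rw [ascPochhammer_succ_eval, Nat.factorial_succ]
  push_cast
  have h1 : (Nat.factorial k : ℝ) ≠ 0 := by positivity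
  field_simp
  ring

lemma aa_le_one (k : ℕ) : aa k ≤ 1 := by
  induction k with
  | zero => simp [aa]
  | succ k ih =>
    have h := aa_succ k
    have hk : (0:ℝ) < (k:ℝ) + 1 := by positivity
    have : aa (k+1) = ((k:ℝ) + 1/2)/((k:ℝ)+1) * aa k := by
      field_simp at h ⊢; linarith [h]
    rw [this]
    calc ((k:ℝ) + 1/2)/((k:ℝ)+1) * aa k ≤ 1 * aa k := by
          apply mul_le_mul_of_nonneg_right _ (aa_pos k).le
          rw [div_le_one hk]; linarith
      _ ≤ 1 := by simpa using ih

lemma refl_sum (m : ℕ) :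
    2 * ∑ k ∈ range (m+1), (k:ℝ) * (aa k * aa (m-k)) =
      m * ∑ k ∈ range (m+1), aa k * aa (m-k) := by
  have h1 : ∑ k ∈ range (m+1), ((m:ℝ) - (k:ℝ)) * (aa k * aa (m-k)) =
      ∑ k ∈ range (m+1), (k:ℝ) * (aa k * aa (m-k)) := by
    have hrefl := Finset.sum_range_reflect (fun j => (j:ℝ) * (aa j * aa (m - j))) (m+1)
    simp only [Nat.add_sub_cancel] at hrefl
    rw [← hrefl]
    apply Finset.sum_congr rfl
    intro j hj
    have hjm : j ≤ m := Nat.lt_succ_iff.mp (Finset.mem_range.mp hj)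
    have h2 : m - (m - j) = j := Nat.sub_sub_self hjm
    rw [h2, Nat.cast_sub hjm]
    ring
  have : ∑ k ∈ range (m+1), ((m:ℝ) - (k:ℝ)) * (aa k * aa (m-k)) =
      m * ∑ k ∈ range (m+1), aa k * aa (m-k) - ∑ k ∈ range (m+1), (k:ℝ) * (aa k * aa (m-k)) := by
    rw [Finset.mul_sum, ← Finset.sum_sub_distrib]
    apply Finset.sum_congr rfl; intros; ring
  rw [this] at h1
  linarith

lemma cauchy_one (m : ℕ) : ∑ k ∈ range (m+1), aa k * aa (m-k) = 1 := by
  induction m with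
  | zero => simp [aa]
  | succ m ih =>
    have hshift : ∑ k ∈ range (m+2), (k:ℝ) * (aa k * aa (m+1-k)) =
        ∑ j ∈ range (m+1), ((j:ℝ)+1) * (aa (j+1) * aa (m-j)) := by
      rw [Finset.sum_range_succ' (fun k => (k:ℝ) * (aa k * aa (m+1-k))) (m+1)]
      simp only [Nat.cast_zero, zero_mul, add_zero]
      apply Finset.sum_congr rfl
      intro j hj
      have : m + 1 - (j+1) = m - j := by omega
      rw [this]
      push_cast; ring
    have hrec : ∑ j ∈ range (m+1), ((j:ℝ)+1) * (aa (j+1) * aa (m-j)) =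
        ∑ j ∈ range (m+1), (j:ℝ) * (aa j * aa (m-j)) +
          (1/2) * ∑ j ∈ range (m+1), aa j * aa (m-j) := by
      rw [Finset.mul_sum, ← Finset.sum_add_distrib]
      apply Finset.sum_congr rfl
      intro j hj
      have h := aa_succ j
      calc ((j:ℝ)+1) * (aa (j+1) * aa (m-j)) = (((j:ℝ)+1) * aa (j+1)) * aa (m-j) := by ring
        _ = (((j:ℝ) + 1/2) * aa j) * aa (m-j) := by rw [h]
        _ = (j:ℝ) * (aa j * aa (m-j)) + 1/2 * (aa j * aa (m-j)) := by ring
    have h1 := refl_sum (m+1)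
    have h2 := refl_sum m
    rw [hshift, hrec, ih] at h1
    push_cast at h1
    rw [ih] at h2
    have hm : ((m:ℝ)+1) ≠ 0 := by positivity
    have hc : ((m:ℝ)+1) * (∑ k ∈ range (m+1+1), aa k * aa (m+1-k)) = ((m:ℝ)+1) * 1 := by
      rw [mul_one]; push_cast; push_cast at h1; linarith
    exact mul_left_cancel₀ hm hc

lemma summable_norm_aa {y : ℝ} (h0 : 0 ≤ y) (h1 : y < 1) :
    Summable (fun k => ‖aa k * y^k‖) := by
  apply Summable.of_nonneg_of_le (fun k => norm_nonneg _) (fun k => ?_)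
    (summable_geometric_of_lt_one h0 h1)
  rw [Real.norm_eq_abs, abs_of_nonneg (mul_nonneg (aa_pos k).le (pow_nonneg h0 k))]
  calc aa k * y^k ≤ 1 * y^k :=
        mul_le_mul_of_nonneg_right (aa_le_one k) (pow_nonneg h0 k)
    _ = y^k := one_mul _

lemma hasSum_aa {y : ℝ} (h0 : 0 ≤ y) (h1 : y < 1) :
    HasSum (fun k => aa k * y^k) ((Real.sqrt (1-y))⁻¹) := by
  have hnorm := summable_norm_aa h0 h1
  have hs : Summable (fun k => aa k * y^k) := hnorm.of_norm
  have hsq : (∑' k, aa k * y^k) * (∑' k, aa k * y^k) = (1-y)⁻¹ := by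
    rw [tsum_mul_tsum_eq_tsum_sum_range_of_summable_norm hnorm hnorm]
    have heq : ∀ m : ℕ, ∑ k ∈ Finset.range (m+1), (aa k * y^k) * (aa (m-k) * y^(m-k)) = y^m := by
      intro m
      have : ∀ k ∈ Finset.range (m+1), (aa k * y^k) * (aa (m-k) * y^(m-k))
          = (aa k * aa (m-k)) * y^m := by
        intro k hk
        have hkm : k ≤ m := Nat.lt_succ_iff.mp (Finset.mem_range.mp hk)
        rw [show (aa k * y^k) * (aa (m-k) * y^(m-k)) = (aa k * aa (m-k)) * (y^k * y^(m-k)) by ring,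
          ← pow_add, Nat.add_sub_cancel' hkm]
      rw [Finset.sum_congr rfl this, ← Finset.sum_mul, _root_.cauchy_one, one_mul]
    rw [tsum_congr heq, tsum_geometric_of_lt_one h0 h1]
  have hpos : (0:ℝ) < ∑' k, aa k * y^k := by
    have h00 : (0:ℝ) < aa 0 * y^0 := by simpa using aa_pos 0
    calc (0:ℝ) < aa 0 * y^0 := h00
      _ ≤ ∑' k, aa k * y^k :=
        Summable.le_tsum hs 0 (fun i _ => mul_nonneg (aa_pos i).le (pow_nonneg h0 i))
  have hT : (∑' k, aa k * y^k) = (Real.sqrt (1-y))⁻¹ := by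
    rw [← Real.sqrt_sq hpos.le, sq, hsq, ← Real.sqrt_inv]
  exact hT ▸ hs.hasSum

lemma sub_lemma (n : ℕ) (hn : 1 ≤ n) {c x : ℝ} (hc : 0 ≤ c) (hcx : c^2 + x = 1) :
    (∫ u in Set.Ioi (0:ℝ), (n:ℝ) * (u^2 + 2*u*c + 1) ^ (-(((n:ℝ)+1)/2)))
      = ∫ v in Set.Ioo (0:ℝ) 1, (n:ℝ) * v^(n-1) * (Real.sqrt (1 - x*v^2))⁻¹ := by
  have hx0 : x ≤ 1 := by nlinarith
  set φ : ℝ → ℝ := fun v => Real.sqrt ((v^2)⁻¹ - x) - c with hφ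
  set φ' : ℝ → ℝ := fun v => (-(2*v) / ((v^2)^2)) / (2 * Real.sqrt ((v^2)⁻¹ - x)) with hφ'
  have hrad : ∀ v ∈ Ioo (0:ℝ) 1, 0 < (v^2)⁻¹ - x := by
    intro v hv
    have hv2 : v^2 < 1 := by nlinarith [hv.1, hv.2]
    have h1 : (1:ℝ) < (v^2)⁻¹ := (one_lt_inv₀ (pow_pos hv.1 2)).mpr hv2
    linarith
  have hderiv : ∀ v ∈ Ioo (0:ℝ) 1, HasDerivWithinAt φ (φ' v) (Ioo 0 1) v := by
    intro v hv
    have hv0 : v ≠ 0 := ne_of_gt hv.1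
    have h1 : HasDerivAt (fun w : ℝ => (w^2)⁻¹ - x) (-(2*v) / ((v^2)^2)) v := by
      have h := ((hasDerivAt_pow 2 v).inv (pow_ne_zero 2 hv0)).sub_const x
      convert h using 1
      norm_num
      all_goals norm_num
      all_goals rfl
    have h2 := (h1.sqrt (ne_of_gt (hrad v hv))).sub_const c
    exact h2.hasDerivWithinAt
  have hinj : InjOn φ (Ioo 0 1) := by
    intro v1 h1 v2 h2 heq
    have hs : Real.sqrt ((v1^2)⁻¹ - x) = Real.sqrt ((v2^2)⁻¹ - x) := by
      have : Real.sqrt ((v1^2)⁻¹ - x) - c = Real.sqrt ((v2^2)⁻¹ - x) - c := heq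
      linarith
    have e1 : (v1^2)⁻¹ = (v2^2)⁻¹ := by
      have a1 := Real.sq_sqrt (hrad v1 h1).le
      have a2 := Real.sq_sqrt (hrad v2 h2).le
      rw [hs] at a1
      have : (v1^2)⁻¹ - x = (v2^2)⁻¹ - x := by rw [← a1, a2]
      linarith
    have e2 : v1^2 = v2^2 := by
      have := congrArg (·⁻¹) e1
      simpa using this
    calc v1 = Real.sqrt (v1^2) := (Real.sqrt_sq h1.1.le).symm
      _ = Real.sqrt (v2^2) := by rw [e2]
      _ = v2 := Real.sqrt_sq h2.1.le
  have himg : φ '' (Ioo 0 1) = Ioi (0:ℝ) := by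
    apply Set.Subset.antisymm
    · rintro _ ⟨v, hv, rfl⟩
      have hr := hrad v hv
      have hlt : c < Real.sqrt ((v^2)⁻¹ - x) := by
        have hv2 : v^2 < 1 := by nlinarith [hv.1, hv.2]
        have h1 : (1:ℝ) < (v^2)⁻¹ := (one_lt_inv₀ (pow_pos hv.1 2)).mpr hv2
        have hgt : c^2 < (v^2)⁻¹ - x := by linarith
        calc c = Real.sqrt (c^2) := (Real.sqrt_sq hc).symm
          _ < Real.sqrt ((v^2)⁻¹ - x) := Real.sqrt_lt_sqrt (sq_nonneg c) hgt
      have : (0:ℝ) < φ v := by simp only [hφ]; linarith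
      exact this
    · rintro u hu
      have hu0 : (0:ℝ) < u := hu
      set b := u^2 + 2*u*c + 1 with hb
      have hb1 : 1 < b := by nlinarith
      have hbpos : (0:ℝ) < b := by linarith
      have hsb : 1 < Real.sqrt b := by
        calc (1:ℝ) = Real.sqrt 1 := Real.sqrt_one.symm
          _ < Real.sqrt b := Real.sqrt_lt_sqrt zero_le_one hb1
      refine ⟨(Real.sqrt b)⁻¹, ⟨by positivity, ?_⟩, ?_⟩
      · rw [inv_lt_one_iff₀]
        right; exact hsb
      · show φ ((Real.sqrt b)⁻¹) = u
        have h1 : ((((Real.sqrt b)⁻¹))^2)⁻¹ = b := by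
          rw [inv_pow, inv_inv, Real.sq_sqrt hbpos.le]
        simp only [hφ]
        rw [h1]
        have h2 : b - x = (u + c)^2 := by nlinarith
        rw [h2, Real.sqrt_sq (by positivity : (0:ℝ) ≤ u + c)]
        ring
  have key := integral_image_eq_integral_abs_deriv_smul measurableSet_Ioo hderiv hinj
      (fun u => (n:ℝ) * (u^2 + 2*u*c + 1) ^ (-(((n:ℝ)+1)/2)))
  rw [himg] at key
  rw [key]
  apply setIntegral_congr_fun measurableSet_Ioo
  intro v hv
  have hv0 : (0:ℝ) < v := hv.1
  have hr := hrad v hv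
  have hpos1 : 0 < 1 - x*v^2 := by
    have : (v^2)⁻¹ - x = (1 - x*v^2)/v^2 := by field_simp
    rw [this] at hr
    have hv2 : (0:ℝ) < v^2 := by positivity
    exact (div_pos_iff.mp hr).resolve_right (fun h => absurd hv2 (not_lt.mpr h.2.le)) |>.1
  have hS : (0:ℝ) < Real.sqrt (1 - x*v^2) := Real.sqrt_pos.mpr hpos1
  -- sqrt r = sqrt(1-xv^2)/v
  have hs1 : Real.sqrt ((v^2)⁻¹ - x) = Real.sqrt (1 - x*v^2) / v := by
    have h0 : (v^2)⁻¹ - x = (1 - x*v^2)/v^2 := by field_simp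
    rw [h0, Real.sqrt_div hpos1.le, Real.sqrt_sq hv0.le]
  -- base computation
  have hA : (φ v)^2 + 2*(φ v)*c + 1 = (v^2)⁻¹ := by
    simp only [hφ]
    have h := Real.sq_sqrt hr.le
    linear_combination h - hcx
  -- rpow computation
  have hB : ((v^2)⁻¹ : ℝ) ^ (-(((n:ℝ)+1)/2)) = v^(n+1) := by
    rw [Real.inv_rpow (sq_nonneg v), Real.rpow_neg (sq_nonneg v), inv_inv,
      ← Real.rpow_natCast v 2, ← Real.rpow_mul hv0.le,
      show ((2:ℕ):ℝ) * (((n:ℝ)+1)/2) = ((n+1:ℕ):ℝ) by push_cast; ring,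
      Real.rpow_natCast]
  simp only [smul_eq_mul]
  rw [hA, hB]
  have h2v : (0:ℝ) < 2*v := by linarith
  have hden : (0:ℝ) < (v^2)^2 := pow_pos (pow_pos hv0 2) 2
  have hphi' : φ' v = -((2*v/((v^2)^2)) / (2*(Real.sqrt (1-x*v^2)/v))) := by
    simp only [hφ']
    rw [hs1]
    ring
  rw [hphi', abs_neg,
    abs_of_pos (div_pos (div_pos h2v hden) (mul_pos two_pos (div_pos hS hv0)))]
  have hpow : v^(n+1) = v^(n-1)*(v^2) := by
    rw [← pow_add]
    congr 1
    omega
  have hSne : Real.sqrt (1-x*v^2) ≠ 0 := ne_of_gt hS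
  have hvne : v ≠ 0 := ne_of_gt hv0
  field_simp
  rw [hpow]
  ring

lemma asc_shift (t : ℝ) (k : ℕ) :
    t * (ascPochhammer ℝ k).eval (t+1) = (ascPochhammer ℝ k).eval t * (t + k) := by
  have h1 := ascPochhammer_succ_eval k t
  have h2 : (ascPochhammer ℝ (k+1)).eval t = t * (ascPochhammer ℝ k).eval (t+1) := by
    rw [ascPochhammer_succ_left]
    simp [Polynomial.eval_comp]
  rw [← h2, h1]

lemma term_eq (n k : ℕ) (hn : 1 ≤ n) (y : ℝ) :
    (ascPochhammer ℝ k).eval ((n : ℝ) / 2) * (ascPochhammer ℝ k).eval (1 / 2) /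
        ((ascPochhammer ℝ k).eval ((n : ℝ) / 2 + 1) * (Nat.factorial k : ℝ)) *
        y ^ (2 * k)
      = (n:ℝ)/((n:ℝ)+2*k) * (aa k * (y^2)^k) := by
  have hn0 : (0:ℝ) < (n:ℝ) := by exact_mod_cast hn
  have hC : (0:ℝ) < (ascPochhammer ℝ k).eval ((n:ℝ)/2 + 1) := asc_pos (by linarith) k
  have hF : (0:ℝ) < (Nat.factorial k : ℝ) := by positivity
  have hden : (0:ℝ) < (n:ℝ) + 2*k := by positivity
  have key : (ascPochhammer ℝ k).eval ((n:ℝ)/2) * ((n:ℝ) + 2*k)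
      = (n:ℝ) * (ascPochhammer ℝ k).eval ((n:ℝ)/2 + 1) := by
    have h := asc_shift ((n:ℝ)/2) k
    linear_combination (-2) * h
  rw [pow_mul]
  have hAC : (ascPochhammer ℝ k).eval ((n:ℝ)/2) / (ascPochhammer ℝ k).eval ((n:ℝ)/2+1)
      = (n:ℝ)/((n:ℝ)+2*k) := by
    rw [div_eq_div_iff hC.ne' hden.ne']
    exact key
  rw [← div_mul_div_comm, hAC]
  unfold aa
  ring

theorem stmt_5 (n : ℕ) (hn : 1 ≤ n) (ψ : ℝ) (hψ : 0 ≤ Real.cos ψ) :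
    Summable (fun k : ℕ =>
      (ascPochhammer ℝ k).eval ((n : ℝ) / 2) * (ascPochhammer ℝ k).eval (1 / 2) /
        ((ascPochhammer ℝ k).eval ((n : ℝ) / 2 + 1) * (Nat.factorial k : ℝ)) *
        Real.sin ψ ^ (2 * k)) ∧
    ∫ u in Set.Ioi (0 : ℝ),
        (n : ℝ) * (u ^ 2 + 2 * u * Real.cos ψ + 1) ^ (-(((n : ℝ) + 1) / 2)) =
      ∑' k : ℕ,
        (ascPochhammer ℝ k).eval ((n : ℝ) / 2) * (ascPochhammer ℝ k).eval (1 / 2) /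
          ((ascPochhammer ℝ k).eval ((n : ℝ) / 2 + 1) * (Nat.factorial k : ℝ)) *
          Real.sin ψ ^ (2 * k) := by
  have hcx : Real.cos ψ ^ 2 + Real.sin ψ ^ 2 = 1 := Real.cos_sq_add_sin_sq ψ
  set x : ℝ := Real.sin ψ ^ 2 with hxdef
  have hx0 : (0:ℝ) ≤ x := sq_nonneg _
  have hx1 : x ≤ 1 := by nlinarith [sq_nonneg (Real.cos ψ)]
  set t : ℕ → ℝ := fun k => (n:ℝ)/((n:ℝ)+2*k) * (aa k * x^k) with htdef
  have hterm : ∀ k : ℕ,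
      (ascPochhammer ℝ k).eval ((n : ℝ) / 2) * (ascPochhammer ℝ k).eval (1 / 2) /
        ((ascPochhammer ℝ k).eval ((n : ℝ) / 2 + 1) * (Nat.factorial k : ℝ)) *
        Real.sin ψ ^ (2 * k) = t k := fun k => term_eq n k hn (Real.sin ψ)
  have ht0 : ∀ k, 0 ≤ t k := fun k =>
    mul_nonneg (by positivity) (mul_nonneg (aa_pos k).le (pow_nonneg hx0 k))
  set F : ℝ → ℝ := fun v => (n:ℝ) * v^(n-1) * (Real.sqrt (1 - x*v^2))⁻¹ with hFdef
  set fk : ℕ → ℝ → ℝ := fun k v => ((n:ℝ) * aa k * x^k) * v^(n-1+2*k) with hfkdef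
  have hptw : ∀ v ∈ Set.Ioo (0:ℝ) 1, HasSum (fun k => fk k v) (F v) := by
    intro v hv
    have hv0 := hv.1
    have hv1 := hv.2
    have hy0 : (0:ℝ) ≤ x * v^2 := by positivity
    have hy1 : x * v^2 < 1 := by nlinarith
    have h := (hasSum_aa hy0 hy1).mul_left ((n:ℝ) * v^(n-1))
    have heq : (fun k => (n:ℝ) * v^(n-1) * (aa k * (x*v^2)^k)) = fun k => fk k v := by
      funext k
      simp only [hfkdef]
      rw [mul_pow, ← pow_mul, pow_add]
      ring
    rw [heq] at h
    exact h
  have hcont : ∀ k, Continuous (fk k) := fun k => continuous_const.mul (continuous_pow _)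
  have hfk_nonneg : ∀ k, ∀ v ∈ Set.Ioo (0:ℝ) 1, 0 ≤ fk k v := by
    intro k v hv
    have hv0 := hv.1
    simp only [hfkdef]
    have := aa_pos k
    positivity
  have hfk_int : ∀ k, IntegrableOn (fk k) (Set.Ioo 0 1) := fun k =>
    ((hcont k).integrableOn_Icc).mono_set Set.Ioo_subset_Icc_self
  have hfk_val : ∀ k, ∫ v in Set.Ioo (0:ℝ) 1, fk k v = t k := by
    intro k
    rw [← MeasureTheory.integral_Ioc_eq_integral_Ioo,
      ← intervalIntegral.integral_of_le zero_le_one]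
    simp only [hfkdef]
    rw [intervalIntegral.integral_const_mul, integral_pow]
    rw [one_pow, zero_pow (by omega : n - 1 + 2*k + 1 ≠ 0)]
    have hm : ((n - 1 + 2*k : ℕ) : ℝ) + 1 = (n:ℝ) + 2*k := by
      rw [Nat.cast_add, Nat.cast_sub hn]
      push_cast
      ring
    rw [hm, htdef]
    ring
  have hF0 : ∀ v ∈ Set.Ioo (0:ℝ) 1, 0 ≤ F v := by
    intro v hv
    have hv0 := hv.1
    simp only [hFdef]
    positivity
  have hFmeas : Measurable F :=
    ((continuous_const.mul (continuous_pow _)).measurable).mul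
      ((Real.continuous_sqrt.comp (continuous_const.sub (continuous_const.mul (continuous_pow 2)))).measurable.inv)
  set G : ℝ → ℝ := fun v => (n:ℝ) * (Real.sqrt (1 - v))⁻¹ with hGdef
  have hGint : IntegrableOn G (Set.Ioo 0 1) := by
    have h1 : IntervalIntegrable (fun w : ℝ => w ^ (-(1/2) : ℝ)) MeasureTheory.volume 0 1 :=
      intervalIntegral.intervalIntegrable_rpow' (by norm_num)
    have h2 : IntervalIntegrable (fun v : ℝ => (1-v) ^ (-(1/2) : ℝ)) MeasureTheory.volume 0 1 := by
      have h2 := (h1.comp_sub_left 1)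
      norm_num at h2
      exact h2.symm
    have h3 : IntegrableOn (fun v : ℝ => (1-v) ^ (-(1/2) : ℝ)) (Set.Ioo 0 1) :=
      ((intervalIntegrable_iff_integrableOn_Ioc_of_le zero_le_one).mp h2).mono_set
        Set.Ioo_subset_Ioc_self
    have h4 := (h3.const_mul (n:ℝ))
    apply MeasureTheory.IntegrableOn.congr_fun h4 _ measurableSet_Ioo
    intro v hv
    simp only [hGdef]
    rw [Real.rpow_neg (by linarith [hv.2] : (0:ℝ) ≤ 1 - v), ← Real.sqrt_eq_rpow]
  have hFleG : ∀ v ∈ Set.Ioo (0:ℝ) 1, F v ≤ G v := by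
    intro v hv
    have hv0 := hv.1
    have hv1 := hv.2
    have hsv : (0:ℝ) < Real.sqrt (1 - v) := Real.sqrt_pos.mpr (by linarith)
    simp only [hFdef, hGdef]
    calc (n:ℝ) * v^(n-1) * (Real.sqrt (1-x*v^2))⁻¹
        ≤ (n:ℝ) * 1 * (Real.sqrt (1-v))⁻¹ := by
          apply mul_le_mul
          · exact mul_le_mul_of_nonneg_left (pow_le_one₀ hv0.le hv1.le) (by positivity)
          · exact inv_anti₀ hsv (Real.sqrt_le_sqrt (by nlinarith))
          · positivity
          · positivity
      _ = (n:ℝ) * (Real.sqrt (1-v))⁻¹ := by rw [mul_one]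
  have hmeasI : MeasurableSet (Set.Ioo (0:ℝ) 1) := measurableSet_Ioo
  have hlin : ∫⁻ v in Set.Ioo (0:ℝ) 1, ENNReal.ofReal (F v)
      = ∑' k, ENNReal.ofReal (t k) := by
    have hpt : ∀ v ∈ Set.Ioo (0:ℝ) 1,
        ENNReal.ofReal (F v) = ∑' k, ENNReal.ofReal (fk k v) := by
      intro v hv
      have h := hptw v hv
      rw [← h.tsum_eq, ENNReal.ofReal_tsum_of_nonneg (fun k => hfk_nonneg k v hv) h.summable]
    rw [setLIntegral_congr_fun hmeasI hpt]
    rw [MeasureTheory.lintegral_tsum (fun k => ((hcont k).measurable.ennreal_ofReal).aemeasurable)]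
    congr 1
    funext k
    rw [← ofReal_integral_eq_lintegral_ofReal (hfk_int k)
      ((ae_restrict_iff' hmeasI).mpr (MeasureTheory.ae_of_all _ (hfk_nonneg k)))]
    rw [hfk_val k]
  have hfin : ∑' k, ENNReal.ofReal (t k) < ⊤ := by
    rw [← hlin]
    calc ∫⁻ v in Set.Ioo (0:ℝ) 1, ENNReal.ofReal (F v)
        ≤ ∫⁻ v in Set.Ioo (0:ℝ) 1, ENNReal.ofReal (G v) := by
          apply MeasureTheory.lintegral_mono_ae
          exact (ae_restrict_iff' hmeasI).mpr (MeasureTheory.ae_of_all _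
            (fun v hv => ENNReal.ofReal_le_ofReal (hFleG v hv)))
      _ ≤ ∫⁻ v in Set.Ioo (0:ℝ) 1, (‖G v‖₊ : ENNReal) := by
          exact MeasureTheory.lintegral_mono (fun v => Real.ofReal_le_enorm (G v))
      _ < ⊤ := hGint.2
  have hsumt : Summable t := by
    have h := ENNReal.summable_toReal hfin.ne
    exact h.congr (fun k => ENNReal.toReal_ofReal (ht0 k))
  constructor
  · exact (summable_congr hterm).mpr hsumt
  · rw [sub_lemma n hn hψ hcx, tsum_congr hterm]
    have hFae : 0 ≤ᵐ[MeasureTheory.volume.restrict (Set.Ioo (0:ℝ) 1)] F :=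
      (ae_restrict_iff' hmeasI).mpr (MeasureTheory.ae_of_all _ hF0)
    rw [MeasureTheory.integral_eq_lintegral_of_nonneg_ae hFae hFmeas.aestronglyMeasurable]
    rw [hlin, ENNReal.tsum_toReal_eq (fun k => ENNReal.ofReal_ne_top)]
    exact tsum_congr (fun k => ENNReal.toReal_ofReal (ht0 k))
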